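/- Suppose (x_t, y_t, z_t) solves ẋ = −(θ/δ) y z, ẏ = (θ/δ) x z, ż = 0 with θ ≠ 0, δ > 0, and initial condition of norm at most 1 satisfying max(|x₀|,|y₀|) ≥ c₀ and |z₀| ≥ c₁δ for constants c₀, c₁ > 0. Let τ ~ Exp(1/h), h ∈ (0,1). Then there is q = q(c₀, c₁, θ, h) > 0 independent of δ such that with probability at least q, min(|x_τ|, |y_τ|) ≥ c₀/2. -/

import Mathlib

open Real MeasureTheory ProbabilityTheory

lemma expMeasure_Iic' {r : ℝ} (hr : 0 < r) {α : ℝ} (hα : 0 ≤ α) :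
    expMeasure r (Set.Iic α) = ENNReal.ofReal (1 - Real.exp (-(r * α))) := by
  have h1 : expMeasure r (Set.Iic α) = ∫⁻ y in Set.Iic α, exponentialPDF r y := by
    rw [expMeasure, gammaMeasure, withDensity_apply _ measurableSet_Iic]
    rfl
  rw [h1, lintegral_exponentialPDF_eq_antiDeriv hr, if_pos hα]

lemma expMeasure_Ioc' {r : ℝ} (hr : 0 < r) {α β : ℝ} (hα : 0 ≤ α) (hαβ : α ≤ β) :
    expMeasure r (Set.Ioc α β) = ENNReal.ofReal (Real.exp (-(r * α)) - Real.exp (-(r * β))) := by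
  have hu : Set.Iic α ∪ Set.Ioc α β = Set.Iic β := Set.Iic_union_Ioc_eq_Iic hαβ
  have hdisj : Disjoint (Set.Iic α) (Set.Ioc α β) := Set.Iic_disjoint_Ioc le_rfl
  have hadd : ENNReal.ofReal (1 - Real.exp (-(r * α))) + expMeasure r (Set.Ioc α β)
      = ENNReal.ofReal (1 - Real.exp (-(r * β))) := by
    rw [← expMeasure_Iic' hr hα, ← expMeasure_Iic' hr (hα.trans hαβ),
      ← measure_union hdisj measurableSet_Ioc, hu]
  have h2 : expMeasure r (Set.Ioc α β) =
      ENNReal.ofReal (1 - Real.exp (-(r * β))) - ENNReal.ofReal (1 - Real.exp (-(r * α))) :=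
    ENNReal.eq_sub_of_add_eq ENNReal.ofReal_ne_top (by rw [add_comm] at hadd; exact hadd)
  have hnn : (0:ℝ) ≤ 1 - Real.exp (-(r * α)) := by
    have : Real.exp (-(r * α)) ≤ 1 := Real.exp_le_one_iff.2 (by nlinarith)
    linarith
  rw [h2, ← ENNReal.ofReal_sub _ hnn]
  congr 1
  ring

lemma abs_cos_sin_ge' {ψ : ℝ} (hψ : |Real.cos (2*ψ)| ≤ 1/2) :
    1/2 ≤ |Real.cos ψ| ∧ 1/2 ≤ |Real.sin ψ| := by
  have h2 := Real.cos_two_mul ψ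
  have hp := Real.sin_sq_add_cos_sq ψ
  have hb := abs_le.mp hψ
  constructor
  · nlinarith [sq_abs (Real.cos ψ), abs_nonneg (Real.cos ψ)]
  · nlinarith [sq_abs (Real.sin ψ), abs_nonneg (Real.sin ψ)]

lemma abs_cos_le_half' {k : ℤ} {s : ℝ} (h1 : π/3 + k*π ≤ s) (h2 : s ≤ 2*π/3 + k*π) :
    |Real.cos s| ≤ 1/2 := by
  have hs : s = (s - k*π) + k*π := by ring
  have hck : Real.cos s = (-1)^k * Real.cos (s - k*π) := by
    conv_lhs => rw [hs]
    exact Real.cos_add_int_mul_pi _ k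
  have habs : |Real.cos s| = |Real.cos (s - k*π)| := by
    rw [hck, abs_mul]
    rcases Int.even_or_odd k with he | ho
    · rw [he.neg_one_zpow]; simp
    · rw [ho.neg_one_zpow]; simp
  rw [habs]
  have hlo : π/3 ≤ s - k*π := by linarith
  have hhi : s - k*π ≤ 2*π/3 := by linarith
  have hπ := Real.pi_pos
  have hub : Real.cos (s - k*π) ≤ 1/2 := by
    have := Real.cos_le_cos_of_nonneg_of_le_pi (by positivity : (0:ℝ) ≤ π/3)
      (by linarith : s - k*π ≤ π) hlo
    rwa [Real.cos_pi_div_three] at this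
  have hlb : -(1/2) ≤ Real.cos (s - k*π) := by
    have h' := Real.cos_le_cos_of_nonneg_of_le_pi (by linarith : (0:ℝ) ≤ s - k*π)
      (by linarith : 2*π/3 ≤ π) hhi
    have h23 : Real.cos (2*π/3) = -(1/2) := by
      have he : (2*π/3 : ℝ) = π - π/3 := by ring
      rw [he, Real.cos_pi_sub, Real.cos_pi_div_three]
    rw [h23] at h'
    linarith
  exact abs_le.mpr ⟨hlb, hub⟩

lemma rotation_sol' {ω : ℝ} {x y : ℝ → ℝ}
    (hx : ∀ t, HasDerivAt x (-(ω * y t)) t)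
    (hy : ∀ t, HasDerivAt y (ω * x t) t) (t : ℝ) :
    x t = x 0 * Real.cos (ω*t) - y 0 * Real.sin (ω*t) ∧
    y t = x 0 * Real.sin (ω*t) + y 0 * Real.cos (ω*t) := by
  have hc : ∀ s : ℝ, HasDerivAt (fun t : ℝ => Real.cos (ω*t)) (-Real.sin (ω*s)*ω) s := by
    intro s
    simpa using ((hasDerivAt_id s).const_mul ω).cos
  have hs : ∀ s : ℝ, HasDerivAt (fun t : ℝ => Real.sin (ω*t)) (Real.cos (ω*s)*ω) s := by
    intro s
    simpa using ((hasDerivAt_id s).const_mul ω).sin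
  have hu : ∀ s, x s * Real.cos (ω*s) + y s * Real.sin (ω*s) = x 0 := by
    have hd : ∀ s, HasDerivAt (fun t => x t * Real.cos (ω*t) + y t * Real.sin (ω*t)) 0 s := by
      intro s
      have := ((hx s).mul (hc s)).add ((hy s).mul (hs s))
      convert this using 1
      case e'_9 => ring
      case e'_8 => rfl
      all_goals rfl
    intro s
    have := is_const_of_deriv_eq_zero (fun s => (hd s).differentiableAt)
      (fun s => (hd s).deriv) s 0
    simpa using this
  have hv : ∀ s, -(x s * Real.sin (ω*s)) + y s * Real.cos (ω*s) = y 0 := by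
    have hd : ∀ s, HasDerivAt (fun t => -(x t * Real.sin (ω*t)) + y t * Real.cos (ω*t)) 0 s := by
      intro s
      have := (((hx s).mul (hs s)).neg).add ((hy s).mul (hc s))
      convert this using 1
      case e'_9 => ring
      case e'_8 => rfl
      all_goals rfl
    intro s
    have := is_const_of_deriv_eq_zero (fun s => (hd s).differentiableAt)
      (fun s => (hd s).deriv) s 0
    simpa using this
  have h1 := hu t
  have h2 := hv t
  have hp := Real.sin_sq_add_cos_sq (ω*t)
  constructor
  · linear_combination Real.cos (ω*t) * h1 - Real.sin (ω*t) * h2 - x t * hp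
  · linear_combination Real.sin (ω*t) * h1 + Real.cos (ω*t) * h2 - y t * hp

set_option maxHeartbeats 1000000 in
/-- Lemma 5.4 (thermalization for the degenerate triad `|j| = |k|`): for the
rotation system `ẋ = −(θ/δ)yz, ẏ = (θ/δ)xz, ż = 0` with initial condition of
norm at most 1 satisfying `max(|x₀|,|y₀|) ≥ c₀` and `|z₀| ≥ c₁δ`, and
`τ ~ Exp(1/h)`, there is `q > 0` depending only on `c₀, c₁, θ, h` (not on `δ`)
such that `min(|x_τ|, |y_τ|) ≥ c₀/2` with probability at least `q`. -/
theorem spinner_thermalization (c₀ c₁ θ h : ℝ)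
    (hc₀ : 0 < c₀) (hc₁ : 0 < c₁) (hθ : θ ≠ 0) (hh : h ∈ Set.Ioo (0:ℝ) 1) :
    ∃ q : ℝ, 0 < q ∧
      ∀ (δ : ℝ), 0 < δ →
      ∀ (x y z : ℝ → ℝ),
        (∀ t, HasDerivAt x (-(θ / δ) * y t * z t) t) →
        (∀ t, HasDerivAt y ((θ / δ) * x t * z t) t) →
        (∀ t, HasDerivAt z 0 t) →
        x 0 ^ 2 + y 0 ^ 2 + z 0 ^ 2 ≤ 1 →
        max |x 0| |y 0| ≥ c₀ →
        |z 0| ≥ c₁ * δ →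
        ENNReal.ofReal q ≤
          expMeasure (1 / h) {t : ℝ | c₀ / 2 ≤ min |x t| |y t|} := by
  obtain ⟨hh0, hh1⟩ := hh
  have hθa : 0 < |θ| := abs_pos.mpr hθ
  have hπ := Real.pi_pos
  set Pmax : ℝ := π / (2 * (|θ| * c₁)) with hPmaxdef
  have hPmaxpos : 0 < Pmax := by positivity
  set M : ℝ := Real.exp (-(Pmax / h)) with hMdef
  have hMpos : 0 < M := Real.exp_pos _
  refine ⟨M / 6, by positivity, ?_⟩
  intro δ hδ x y z hx hy hz hnorm hmax hz0
  -- z is constant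
  have hzc : ∀ t, z t = z 0 := fun t =>
    is_const_of_deriv_eq_zero (fun s => (hz s).differentiableAt) (fun s => (hz s).deriv) t 0
  set ω := θ * z 0 / δ with hωdef
  have hx' : ∀ t, HasDerivAt x (-(ω * y t)) t := by
    intro t
    have h' := hx t
    rw [hzc t] at h'
    convert h' using 1
    rw [hωdef]; ring
  have hy' : ∀ t, HasDerivAt y (ω * x t) t := by
    intro t
    have h' := hy t
    rw [hzc t] at h'
    convert h' using 1
    rw [hωdef]; ring
  have hsol := fun t => rotation_sol' hx' hy' t
  -- polar coordinates
  set ρ := Real.sqrt (x 0^2 + y 0^2) with hρdef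
  have hρx : |x 0| ≤ ρ := by
    rw [hρdef, ← Real.sqrt_sq_eq_abs]
    exact Real.sqrt_le_sqrt (by linarith only [sq_nonneg (y 0)])
  have hρy : |y 0| ≤ ρ := by
    rw [hρdef, ← Real.sqrt_sq_eq_abs]
    exact Real.sqrt_le_sqrt (by linarith only [sq_nonneg (x 0)])
  have hρc : c₀ ≤ ρ := le_trans hmax (max_le hρx hρy)
  have hρpos : 0 < ρ := lt_of_lt_of_le hc₀ hρc
  set c : ℂ := ⟨x 0, y 0⟩ with hcdef
  have habs : ‖c‖ = ρ := by
    rw [Complex.norm_def, hcdef, Complex.normSq_mk, hρdef]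
    congr 1
    ring
  have hcne : c ≠ 0 := by
    intro h0
    rw [h0, norm_zero] at habs
    linarith
  set φ₀ := Complex.arg c with hφ₀def
  have hcos : Real.cos φ₀ = x 0 / ρ := by rw [hφ₀def, Complex.cos_arg hcne, habs, hcdef]
  have hsin : Real.sin φ₀ = y 0 / ρ := by rw [hφ₀def, Complex.sin_arg, habs, hcdef]
  have hx0 : x 0 = ρ * Real.cos φ₀ := by rw [hcos]; field_simp
  have hy0 : y 0 = ρ * Real.sin φ₀ := by rw [hsin]; field_simp
  have hxt : ∀ t, x t = ρ * Real.cos (ω*t + φ₀) := by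
    intro t
    rw [(hsol t).1, hx0, hy0, Real.cos_add]
    ring
  have hyt : ∀ t, y t = ρ * Real.sin (ω*t + φ₀) := by
    intro t
    rw [(hsol t).2, hx0, hy0, Real.sin_add]
    ring
  -- frequency estimates
  have hωabs : |ω| = |θ| * |z 0| / δ := by
    rw [hωdef, abs_div, abs_mul, abs_of_pos hδ]
  have hωlb : |θ| * c₁ ≤ |ω| := by
    rw [hωabs, le_div_iff₀ hδ]
    calc |θ| * c₁ * δ = |θ| * (c₁ * δ) := by ring
      _ ≤ |θ| * |z 0| := mul_le_mul_of_nonneg_left hz0 (abs_nonneg θ)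
  have hωpos : 0 < |ω| := lt_of_lt_of_le (by positivity) hωlb
  set w := 2 * |ω| with hwdef
  have hw : 0 < w := by positivity
  set P := π / w with hPdef
  have hPpos : 0 < P := by positivity
  have hPle : P ≤ Pmax := by
    rw [hPdef, hPmaxdef]
    gcongr
    rw [hwdef]
    linarith
  -- phase normalization
  obtain ⟨φ, hφ⟩ : ∃ φ : ℝ, ∀ t, |Real.cos (2*(ω*t + φ₀))| = |Real.cos (w*t + φ)| := by
    rcases abs_cases ω with ⟨he, _⟩ | ⟨he, _⟩
    · refine ⟨2*φ₀, fun t => ?_⟩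
      rw [hwdef, he]
      ring_nf
    · refine ⟨-(2*φ₀), fun t => ?_⟩
      have harg : w*t + -(2*φ₀) = -(2*(ω*t + φ₀)) := by rw [hwdef, he]; ring
      rw [harg, Real.cos_neg]
  -- first good interval
  set k₀ : ℤ := ⌈(φ - π/3)/π⌉ with hk₀def
  set a := (π/3 + k₀*π - φ)/w with hadef
  have hk₀1 : (φ - π/3)/π ≤ (k₀:ℝ) := Int.le_ceil _
  have hk₀2 : (k₀:ℝ) < (φ - π/3)/π + 1 := Int.ceil_lt_add_one _
  have hnum1 : φ - π/3 ≤ k₀*π := by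
    have := (div_le_iff₀ hπ).1 hk₀1
    linarith
  have hnum2 : (k₀:ℝ)*π < φ - π/3 + π := by
    have hdiv : ((φ - π/3)/π)*π = φ - π/3 := div_mul_cancel₀ _ hπ.ne'
    have h' := mul_lt_mul_of_pos_right hk₀2 hπ
    rw [add_mul, one_mul, hdiv] at h'
    linarith
  have ha0 : 0 ≤ a := by
    rw [hadef]
    apply div_nonneg _ hw.le
    linarith
  have haP : a ≤ P := by
    rw [hadef, hPdef]
    gcongr
    linarith
  set L := P/3 with hLdef
  have hLpos : 0 < L := by positivity
  -- inclusion of intervals in the good set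
  set I : ℕ → Set ℝ := fun n => Set.Ioc (a + n*P) (a + n*P + L) with hIdef
  have hwa : w * a = π/3 + k₀*π - φ := by
    rw [hadef, mul_comm]
    exact div_mul_cancel₀ _ hw.ne'
  have hwP : w * P = π := by
    rw [hPdef, mul_comm]
    exact div_mul_cancel₀ _ hw.ne'
  have hwL : w * L = π/3 := by
    rw [hLdef, show w * (P/3) = (w*P)/3 by ring, hwP]
  have hsub : ∀ n : ℕ, I n ⊆ {t : ℝ | c₀ / 2 ≤ min |x t| |y t|} := by
    intro n t ht
    obtain ⟨ht1, ht2⟩ := ht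
    have e1 : w*(a + n*P) = π/3 + (k₀ + n)*π - φ := by
      push_cast
      rw [mul_add, hwa, show w*(n*P) = n*(w*P) by ring, hwP]
      ring
    have e2 : w*(a + n*P + L) = 2*π/3 + (k₀ + n)*π - φ := by
      push_cast
      rw [mul_add, mul_add, hwa, show w*(n*P) = n*(w*P) by ring, hwP, hwL]
      ring
    have hm1 : w*(a + n*P) ≤ w*t := mul_le_mul_of_nonneg_left ht1.le hw.le
    have hm2 : w*t ≤ w*(a + n*P + L) := mul_le_mul_of_nonneg_left ht2 hw.le
    have hcle : |Real.cos (w*t + φ)| ≤ 1/2 := by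
      apply abs_cos_le_half' (k := k₀ + n)
      · push_cast
        rw [e1] at hm1
        push_cast at hm1
        linarith
      · push_cast
        rw [e2] at hm2
        push_cast at hm2
        linarith
    have h2 : |Real.cos (2*(ω*t + φ₀))| ≤ 1/2 := by rw [hφ t]; exact hcle
    obtain ⟨hcψ, hsψ⟩ := abs_cos_sin_ge' h2
    have hxte : |x t| = ρ * |Real.cos (ω*t + φ₀)| := by
      rw [hxt t, abs_mul, abs_of_pos hρpos]
    have hyte : |y t| = ρ * |Real.sin (ω*t + φ₀)| := by
      rw [hyt t, abs_mul, abs_of_pos hρpos]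
    simp only [Set.mem_setOf_eq, le_min_iff]
    have hcc : c₀ * (1/2) ≤ ρ * |Real.cos (ω*t + φ₀)| :=
      mul_le_mul hρc hcψ (by norm_num) (le_trans hc₀.le hρc)
    have hss : c₀ * (1/2) ≤ ρ * |Real.sin (ω*t + φ₀)| :=
      mul_le_mul hρc hsψ (by norm_num) (le_trans hc₀.le hρc)
    constructor
    · rw [hxte]; linarith only [hcc]
    · rw [hyte]; linarith only [hss]
  -- choose number of periods
  have hr : (0:ℝ) < 1/h := by positivity
  set u := Real.exp (-((1/h)*P)) with hudef
  have hu0 : 0 < u := Real.exp_pos _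
  have hu1 : u < 1 := by
    rw [hudef, Real.exp_lt_one_iff]
    have : 0 < (1/h)*P := by positivity
    linarith
  obtain ⟨N, hN⟩ : ∃ N : ℕ, u^N < 1/2 := exists_pow_lt_of_lt_one (by norm_num) hu1
  -- measure of union of intervals
  have hmeasI : ∀ n : ℕ, expMeasure (1/h) (I n)
      = ENNReal.ofReal (Real.exp (-((1/h)*(a + n*P))) - Real.exp (-((1/h)*(a + n*P + L)))) := by
    intro n
    apply expMeasure_Ioc' hr
    · positivity
    · linarith
  have hdisjI : (↑(Finset.range N) : Set ℕ).PairwiseDisjoint I := by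
    have key : ∀ m n : ℕ, m < n → Disjoint (I m) (I n) := by
      intro m n hlt
      rw [hIdef]
      apply Set.Ioc_disjoint_Ioc.mpr
      have hmn : (m:ℝ) + 1 ≤ n := by exact_mod_cast hlt
      have h1 : a + m*P + L ≤ a + n*P := by
        rw [hLdef]
        have hmul := mul_le_mul_of_nonneg_right hmn hPpos.le
        have hL3 : P/3 ≤ P := by linarith only [hPpos]
        linarith only [hmul, hL3, hPpos]
      calc min (a + m*P + L) (a + n*P + L) ≤ a + m*P + L := min_le_left _ _
        _ ≤ a + n*P := h1
        _ ≤ max (a + m*P) (a + n*P) := le_max_right _ _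
    intro m _ n _ hmn
    rcases lt_or_gt_of_ne hmn with h' | h'
    · exact key m n h'
    · exact (key n m h').symm
  have hunion : expMeasure (1/h) (⋃ n ∈ Finset.range N, I n)
      = ∑ n ∈ Finset.range N, expMeasure (1/h) (I n) :=
    measure_biUnion_finset hdisjI (fun n _ => measurableSet_Ioc)
  have hmono : (⋃ n ∈ Finset.range N, I n) ⊆ {t : ℝ | c₀ / 2 ≤ min |x t| |y t|} := by
    intro t ht
    simp only [Set.mem_iUnion] at ht
    obtain ⟨n, _, htn⟩ := ht
    exact hsub n htn
  -- the real-number estimate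
  set A := Real.exp (-((1/h)*a)) with hAdef
  set B := Real.exp (-((1/h)*(a+L))) with hBdef
  set v := Real.exp (-((1/h)*L)) with hvdef
  have hv0 : 0 < v := Real.exp_pos _
  have hv1 : v < 1 := by
    rw [hvdef, Real.exp_lt_one_iff]
    have : 0 < (1/h)*L := by positivity
    linarith
  have hBAv : B = A * v := by
    rw [hBdef, hAdef, hvdef, ← Real.exp_add]
    congr 1
    ring
  have huv : u = v^3 := by
    rw [hudef, hvdef, ← Real.exp_nat_mul]
    congr 1
    push_cast
    rw [hLdef]
    ring
  have hterm : ∀ n : ℕ,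
      Real.exp (-((1/h)*(a + n*P))) - Real.exp (-((1/h)*(a + n*P + L))) = (A - B) * u^n := by
    intro n
    have e1 : Real.exp (-((1/h)*(a + n*P))) = A * u^n := by
      rw [hAdef, hudef, ← Real.exp_nat_mul, ← Real.exp_add]
      congr 1
      push_cast
      ring
    have e2 : Real.exp (-((1/h)*(a + n*P + L))) = B * u^n := by
      rw [hBdef, hudef, ← Real.exp_nat_mul, ← Real.exp_add]
      congr 1
      push_cast
      ring
    rw [e1, e2]
    ring
  set D := ∑ n ∈ Finset.range N, u^n with hDdef
  have hgeom : D * (1 - u) = 1 - u^N := by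
    have := geom_sum_mul u N
    rw [hDdef]
    linear_combination -this
  -- lower bounds
  have hAu : u ≤ A := by
    rw [hAdef, hudef]
    apply Real.exp_le_exp.mpr
    have : (1/h)*a ≤ (1/h)*P := by
      apply mul_le_mul_of_nonneg_left haP hr.le
    linarith
  have hMu : M ≤ u := by
    rw [hMdef, hudef]
    apply Real.exp_le_exp.mpr
    have h1 : (1/h)*P ≤ (1/h)*Pmax := mul_le_mul_of_nonneg_left hPle hr.le
    have h2 : (1/h)*Pmax = Pmax/h := by ring
    linarith
  have hv3 : 1 - u ≤ 3*(1 - v) := by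
    rw [huv]
    have e : 3*(1-v) - (1-v^3) = (1-v)^2*(v+2) := by ring
    have hnn : 0 ≤ (1-v)^2*(v+2) :=
      mul_nonneg (sq_nonneg _) (by linarith only [hv0])
    linarith only [e, hnn]
  have hMA : M ≤ A := hMu.trans hAu
  have hkey : M/6 * (1 - u) ≤ (A - B) * (1 - u^N) := by
    rw [hBAv]
    have hv1' : (0:ℝ) ≤ 1 - v := by linarith only [hv1]
    have t1 : M * (1 - u) ≤ 3 * (A * (1 - v)) := by
      calc M * (1 - u) ≤ M * (3*(1 - v)) := mul_le_mul_of_nonneg_left hv3 hMpos.le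
        _ ≤ A * (3*(1 - v)) := mul_le_mul_of_nonneg_right hMA (by linarith only [hv1'])
        _ = 3 * (A * (1 - v)) := by ring
    have hAv : 0 ≤ A * (1 - v) := mul_nonneg (Real.exp_pos _).le hv1'
    have t2 : A * (1 - v) * (1/2) ≤ A * (1 - v) * (1 - u^N) :=
      mul_le_mul_of_nonneg_left (by linarith only [hN]) hAv
    have e : (A - A*v) * (1 - u^N) = A * (1 - v) * (1 - u^N) := by ring
    rw [e]
    linarith only [t1, t2]
  have hreal : M/6 ≤ (A - B) * D := by
    have hABD : (A - B) * (1 - u^N) = ((A - B) * D) * (1 - u) := by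
      rw [mul_assoc, mul_comm D (1-u), ← mul_assoc]
      rw [show (A-B)*(1-u)*D = (A-B)*(D*(1-u)) by ring, hgeom]
    rw [hABD] at hkey
    have h1u : 0 < 1 - u := by linarith
    exact le_of_mul_le_mul_right (by linarith [hkey]) h1u
  -- put everything together
  calc ENNReal.ofReal (M/6)
      ≤ ENNReal.ofReal ((A - B) * D) := ENNReal.ofReal_le_ofReal hreal
    _ = ENNReal.ofReal (∑ n ∈ Finset.range N,
          (Real.exp (-((1/h)*(a + n*P))) - Real.exp (-((1/h)*(a + n*P + L))))) := by
        congr 1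
        rw [hDdef, Finset.mul_sum]
        exact (Finset.sum_congr rfl (fun n _ => hterm n)).symm
    _ = ∑ n ∈ Finset.range N, ENNReal.ofReal
          (Real.exp (-((1/h)*(a + n*P))) - Real.exp (-((1/h)*(a + n*P + L)))) := by
        apply ENNReal.ofReal_sum_of_nonneg
        intro n _
        have : (1/h)*(a + n*P) ≤ (1/h)*(a + n*P + L) := by
          apply mul_le_mul_of_nonneg_left _ hr.le
          linarith
        have := Real.exp_le_exp.mpr (by linarith : -((1/h)*(a + n*P + L)) ≤ -((1/h)*(a + n*P)))
        linarith
    _ = ∑ n ∈ Finset.range N, expMeasure (1/h) (I n) := by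
        exact Finset.sum_congr rfl (fun n _ => (hmeasI n).symm)
    _ = expMeasure (1/h) (⋃ n ∈ Finset.range N, I n) := hunion.symm
    _ ≤ expMeasure (1/h) {t : ℝ | c₀ / 2 ≤ min |x t| |y t|} := measure_mono hmono
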